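/- Suppose dim_ℂ S = 4 and dim_ℂ R = 4. Let Q = s₁ ⊗ r₁ + s₂ ⊗ r₂ where s₁, s₂ ∈ S are linearly independent, r₁, r₂ ∈ R are linearly independent, and ω(r₁, r₂) = 0 (a nonminimal square-zero supercharge of the N=(2,0) algebra). Then the range of the linear map β(Q, −) : S ⊗ R → ⋀²S equals the subspace (s₁ ∧ S) + (s₂ ∧ S) of ⋀²S and has dimension 5, and the kernel of β(Q, −) has dimension 11. (This is the paper's claim that a nonminimal supercharge has five invariant directions, so its twist is defined on the product of a smooth four-manifold and a Riemann surface.) -/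

import Mathlib

open TensorProduct ExteriorAlgebra

/-- The wedge `s ∧ t` as an element of the second exterior power `⋀[ℂ]^2 S`. -/
noncomputable def wedge {S : Type} [AddCommGroup S] [Module ℂ S] (s t : S) : ⋀[ℂ]^2 S :=
  ⟨ι ℂ s * ι ℂ t, by
    show _ ∈ LinearMap.range (ι ℂ : S →ₗ[ℂ] ExteriorAlgebra ℂ S) ^ 2
    rw [pow_two]
    exact Submodule.mul_mem_mul (LinearMap.mem_range_self _ s) (LinearMap.mem_range_self _ t)⟩

/-- For fixed `s`, the linear map `S → ⋀²S`, `t ↦ s ∧ t`; its range is the subspace `s ∧ S`. -/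
noncomputable def wedgeMap {S : Type} [AddCommGroup S] [Module ℂ S] (s : S) :
    S →ₗ[ℂ] ⋀[ℂ]^2 S where
  toFun t := wedge s t
  map_add' t t' := Subtype.ext <| by simp [wedge, mul_add]
  map_smul' a t := Subtype.ext <| by simp [wedge, mul_smul_comm]

namespace NonminAux

variable {S : Type} [AddCommGroup S] [Module ℂ S]

lemma wedge_self (s : S) : wedge s s = 0 := Subtype.ext <| by simp [wedge, ι_sq_zero]

lemma wedge_swap (s t : S) : wedge t s = - wedge s t := Subtype.ext <| by
  simp only [wedge, Submodule.coe_neg]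
  exact eq_neg_of_add_eq_zero_left (ι_add_mul_swap (R := ℂ) t s)

noncomputable def alt2 (f g : S →ₗ[ℂ] ℂ) : S [⋀^Fin 2]→ₗ[ℂ] ℂ where
  toFun v := f (v 0) * g (v 1) - f (v 1) * g (v 0)
  map_update_add' := by
    intro _ v i x y
    fin_cases i <;>
      simp [Function.update_apply, Fin.ext_iff] <;> ring
  map_update_smul' := by
    intro _ v i c x
    fin_cases i <;>
      simp [Function.update_apply, Fin.ext_iff] <;> ring
  map_eq_zero_of_eq' := by
    intro v i j h hij
    fin_cases i <;> fin_cases j <;> simp_all <;> ring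

noncomputable def fam (f g : S →ₗ[ℂ] ℂ) : ∀ i : ℕ, S [⋀^Fin i]→ₗ[ℂ] ℂ
  | 2 => alt2 f g
  | _ => 0

noncomputable def Fdual (f g : S →ₗ[ℂ] ℂ) : (⋀[ℂ]^2 S) →ₗ[ℂ] ℂ :=
  (liftAlternating (fam f g)).comp (Submodule.subtype _)

lemma Fdual_wedge (f g : S →ₗ[ℂ] ℂ) (s t : S) :
    Fdual f g (wedge s t) = f s * g t - f t * g s := by
  have h : Fdual f g (wedge s t) = liftAlternating (fam f g) (ι ℂ s * ι ℂ t) := rfl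
  rw [h, liftAlternating_ι_mul, liftAlternating_ι]
  rfl


lemma Fdual_wedge_basis (b : Module.Basis (Fin 4) ℂ S) (k l i j : Fin 4) :
    Fdual (b.coord k) (b.coord l) (wedge (b i) (b j)) =
      (if i = k then (1 : ℂ) else 0) * (if j = l then 1 else 0) -
      (if j = k then (1 : ℂ) else 0) * (if i = l then 1 else 0) := by
  rw [Fdual_wedge]
  simp [Module.Basis.coord_apply, Module.Basis.repr_self, Finsupp.single_apply]

lemma exists_dual_pair {R : Type} [AddCommGroup R] [Module ℂ R]
    (f g : R →ₗ[ℂ] ℂ) (h : ∀ a b : ℂ, a • f + b • g = 0 → a = 0 ∧ b = 0) :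
    ∃ c, f c = 1 ∧ g c = 0 := by
  by_cases hg : g = 0
  · have hf : f ≠ 0 := by
      intro hf
      have := (h 1 0 (by simp [hf, hg])).1
      simp at this
    obtain ⟨x, hx⟩ : ∃ x, f x ≠ 0 := by
      by_contra h'
      push_neg at h'
      exact hf (by ext x; simpa using h' x)
    exact ⟨(f x)⁻¹ • x, by simp [inv_mul_cancel₀ hx], by simp [hg]⟩
  · obtain ⟨b₀, hb₀⟩ : ∃ b₀, g b₀ ≠ 0 := by
      by_contra h'
      push_neg at h'
      exact hg (by ext x; simpa using h' x)
    set b₁ := (g b₀)⁻¹ • b₀ with hb₁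
    have hgb₁ : g b₁ = 1 := by simp [hb₁, inv_mul_cancel₀ hb₀]
    have hh : f - (f b₁) • g ≠ 0 := by
      intro h0
      have h1 : (1 : ℂ) • f + (-(f b₁)) • g = 0 := by
        rw [one_smul, neg_smul, ← sub_eq_add_neg]
        exact h0
      exact one_ne_zero ((h 1 (-(f b₁)) h1).1)
    obtain ⟨x, hx⟩ : ∃ x, (f - f b₁ • g) x ≠ 0 := by
      by_contra h'
      push_neg at h'
      exact hh (by ext x; simpa using h' x)
    set c₀ := x - (g x) • b₁ with hc₀
    have hgc₀ : g c₀ = 0 := by simp [hc₀, hgb₁]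
    have hfc₀ : f c₀ ≠ 0 := by
      have hfc : f c₀ = (f - f b₁ • g) x := by
        simp [hc₀]
        ring
      rw [hfc]
      exact hx
    exact ⟨(f c₀)⁻¹ • c₀, by simp [inv_mul_cancel₀ hfc₀], by simp [hgc₀]⟩

lemma exists_basis_fin4 [FiniteDimensional ℂ S] (hS : Module.finrank ℂ S = 4)
    {s₁ s₂ : S} (hs : LinearIndependent ℂ ![s₁, s₂]) :
    ∃ b : Module.Basis (Fin 4) ℂ S, b 0 = s₁ ∧ b 1 = s₂ := by
  have hne : s₁ ≠ s₂ := by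
    intro h
    have h01 : (![s₁, s₂] : Fin 2 → S) 0 = ![s₁, s₂] 1 := by simp [h]
    have := hs.injective h01
    simp at this
  have hrange : Set.range ![s₁, s₂] = ({s₁, s₂} : Set S) := by
    simp [Matrix.range_cons, Matrix.range_empty, Set.pair_comm]
  have hset : LinearIndepOn ℂ id ({s₁, s₂} : Set S) := by
    have := (linearIndepOn_id_range_iff hs.injective).mpr hs
    rwa [hrange] at this
  set t := hset.extend (Set.subset_univ _) with ht
  set B : Module.Basis t ℂ S := Module.Basis.extend hset with hB
  haveI : Fintype t := FiniteDimensional.fintypeBasisIndex B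
  have hcard : Fintype.card t = 4 := by
    rw [← Module.finrank_eq_card_basis B, hS]
  haveI : DecidableEq ↑t := Classical.decEq _
  have hsub : ({s₁, s₂} : Set S) ⊆ t := hset.subset_extend _
  set a₁ : t := ⟨s₁, hsub (by simp)⟩ with ha₁
  set a₂ : t := ⟨s₂, hsub (by simp)⟩ with ha₂
  have hane : a₁ ≠ a₂ := fun h => hne (congrArg Subtype.val h)
  set e₀ : Fin 4 ≃ t := (Fintype.equivFinOfCardEq hcard).symm with he₀
  set e₁ : Fin 4 ≃ t := e₀.trans (Equiv.swap (e₀ 0) a₁) with he₁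
  have he₁0 : e₁ 0 = a₁ := by simp [he₁, Equiv.swap_apply_left]
  have h11 : e₁ 1 ≠ a₁ := by
    rw [← he₁0]
    intro h
    have := e₁.injective h
    simp at this
  set e₂ : Fin 4 ≃ t := e₁.trans (Equiv.swap (e₁ 1) a₂) with he₂
  have he₂1 : e₂ 1 = a₂ := by simp [he₂, Equiv.swap_apply_left]
  have he₂0 : e₂ 0 = a₁ := by
    simp only [he₂, Equiv.trans_apply, he₁0]
    exact Equiv.swap_apply_of_ne_of_ne (Ne.symm h11) hane
  refine ⟨B.reindex e₂.symm, ?_, ?_⟩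
  · rw [Module.Basis.reindex_apply, Equiv.symm_symm, he₂0, hB, Module.Basis.extend_apply_self]
  · rw [Module.Basis.reindex_apply, Equiv.symm_symm, he₂1, hB, Module.Basis.extend_apply_self]

end NonminAux

set_option maxHeartbeats 1000000 in
/-- Suppose `dim_ℂ S = 4` and `dim_ℂ R = 4`, and let `Q = s₁ ⊗ r₁ + s₂ ⊗ r₂` be a nonminimal
square-zero supercharge of the `N=(2,0)` algebra (`s₁, s₂` linearly independent, `r₁, r₂`
linearly independent, `ω r₁ r₂ = 0`).  Then the range of `β (Q, -) : S ⊗ R → ⋀²S` equals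
`(s₁ ∧ S) + (s₂ ∧ S)` and is 5-dimensional, and the kernel of `β (Q, -)` is 11-dimensional:
a nonminimal supercharge has five invariant directions. -/
theorem nonminimal_supercharge_image_is_five_dimensional
    {S R : Type} [AddCommGroup S] [Module ℂ S] [FiniteDimensional ℂ S]
    [AddCommGroup R] [Module ℂ R] [FiniteDimensional ℂ R]
    (hS : Module.finrank ℂ S = 4) (hR : Module.finrank ℂ R = 4)
    (ω : R →ₗ[ℂ] R →ₗ[ℂ] ℂ)
    (halt : ∀ r : R, ω r r = 0)
    (hnd : ∀ r : R, (∀ r' : R, ω r r' = 0) → r = 0)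
    (β : (S ⊗[ℂ] R) →ₗ[ℂ] (S ⊗[ℂ] R) →ₗ[ℂ] ⋀[ℂ]^2 S)
    (hβ : ∀ (s s' : S) (r r' : R),
      β (s ⊗ₜ[ℂ] r) (s' ⊗ₜ[ℂ] r') = ω r r' • wedge s s')
    (s₁ s₂ : S) (r₁ r₂ : R)
    (hs : LinearIndependent ℂ ![s₁, s₂])
    (hr : LinearIndependent ℂ ![r₁, r₂])
    (hω : ω r₁ r₂ = 0) :
    LinearMap.range (β (s₁ ⊗ₜ[ℂ] r₁ + s₂ ⊗ₜ[ℂ] r₂)) =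
      LinearMap.range (wedgeMap s₁) ⊔ LinearMap.range (wedgeMap s₂) ∧
    Module.finrank ℂ ↥(LinearMap.range (β (s₁ ⊗ₜ[ℂ] r₁ + s₂ ⊗ₜ[ℂ] r₂))) = 5 ∧
    Module.finrank ℂ ↥(LinearMap.ker (β (s₁ ⊗ₜ[ℂ] r₁ + s₂ ⊗ₜ[ℂ] r₂))) = 11 := by
  classical
  obtain ⟨b, hb0, hb1⟩ := NonminAux.exists_basis_fin4 hS hs
  subst hb0
  subst hb1
  set Q := b 0 ⊗ₜ[ℂ] r₁ + b 1 ⊗ₜ[ℂ] r₂ with hQdef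
  have hQ : ∀ (s' : S) (r' : R),
      β Q (s' ⊗ₜ[ℂ] r') = ω r₁ r' • wedge (b 0) s' + ω r₂ r' • wedge (b 1) s' := by
    intro s' r'
    rw [hQdef, map_add, LinearMap.add_apply, hβ, hβ]
  have hpair := LinearIndependent.pair_iff.mp hr
  have hfg : ∀ a c : ℂ, a • (ω r₁) + c • (ω r₂) = 0 → a = 0 ∧ c = 0 := by
    intro a c hac
    apply hpair
    apply hnd
    intro x
    have hx := LinearMap.ext_iff.mp hac x
    simpa [map_add, map_smul, LinearMap.add_apply, LinearMap.smul_apply, smul_eq_mul] using hx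
  have hfg' : ∀ a c : ℂ, a • (ω r₂) + c • (ω r₁) = 0 → a = 0 ∧ c = 0 := by
    intro a c hac
    have h := hfg c a (by rwa [add_comm] at hac)
    exact ⟨h.2, h.1⟩
  obtain ⟨c₁, hc₁₁, hc₁₂⟩ := NonminAux.exists_dual_pair (ω r₁) (ω r₂) hfg
  obtain ⟨c₂, hc₂₂, hc₂₁⟩ := NonminAux.exists_dual_pair (ω r₂) (ω r₁) hfg'
  set W : Fin 5 → ⋀[ℂ]^2 S :=
    ![wedge (b 0) (b 1), wedge (b 0) (b 2), wedge (b 0) (b 3), wedge (b 1) (b 2),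
      wedge (b 1) (b 3)] with hWdef
  set G : Fin 5 → ((⋀[ℂ]^2 S) →ₗ[ℂ] ℂ) :=
    ![NonminAux.Fdual (b.coord 0) (b.coord 1), NonminAux.Fdual (b.coord 0) (b.coord 2),
      NonminAux.Fdual (b.coord 0) (b.coord 3), NonminAux.Fdual (b.coord 1) (b.coord 2),
      NonminAux.Fdual (b.coord 1) (b.coord 3)] with hGdef
  have hGW : ∀ m n : Fin 5, G m (W n) = if m = n then 1 else 0 := by
    intro m n
    fin_cases m <;> fin_cases n <;>
      simp [hWdef, hGdef, NonminAux.Fdual_wedge_basis, Fin.ext_iff] <;>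
      simp (config := { decide := true })
  have hv : LinearIndependent ℂ W := by
    rw [Fintype.linearIndependent_iff]
    intro c hc m
    have h1 := congrArg (G m) hc
    rw [map_sum, map_zero] at h1
    simp only [map_smul, hGW, smul_eq_mul, mul_ite, mul_one, mul_zero] at h1
    simpa [Finset.sum_ite_eq] using h1
  set K := Submodule.span ℂ (Set.range W) with hK
  have hrangeWedge : ∀ s : S, LinearMap.range (wedgeMap s)
      = Submodule.span ℂ (Set.range fun j => wedge s (b j)) := by
    intro s
    rw [LinearMap.range_eq_map, ← b.span_eq, Submodule.map_span, ← Set.range_comp]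
    rfl
  have hUK : LinearMap.range (wedgeMap (b 0)) ≤ K := by
    rw [hrangeWedge, Submodule.span_le]
    rintro x ⟨j, rfl⟩
    fin_cases j
    · show wedge (b 0) (b 0) ∈ K
      rw [NonminAux.wedge_self]; exact K.zero_mem
    · exact Submodule.subset_span ⟨0, rfl⟩
    · exact Submodule.subset_span ⟨1, rfl⟩
    · exact Submodule.subset_span ⟨2, rfl⟩
  have hVK : LinearMap.range (wedgeMap (b 1)) ≤ K := by
    rw [hrangeWedge, Submodule.span_le]
    rintro x ⟨j, rfl⟩
    fin_cases j
    · show wedge (b 1) (b 0) ∈ K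
      rw [NonminAux.wedge_swap]
      exact K.neg_mem (Submodule.subset_span ⟨0, rfl⟩)
    · show wedge (b 1) (b 1) ∈ K
      rw [NonminAux.wedge_self]; exact K.zero_mem
    · exact Submodule.subset_span ⟨3, rfl⟩
    · exact Submodule.subset_span ⟨4, rfl⟩
  have hKUV : K ≤ LinearMap.range (wedgeMap (b 0)) ⊔ LinearMap.range (wedgeMap (b 1)) := by
    rw [hK, Submodule.span_le]
    rintro x ⟨i, rfl⟩
    fin_cases i
    · exact Submodule.mem_sup_left ⟨b 1, rfl⟩
    · exact Submodule.mem_sup_left ⟨b 2, rfl⟩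
    · exact Submodule.mem_sup_left ⟨b 3, rfl⟩
    · exact Submodule.mem_sup_right ⟨b 2, rfl⟩
    · exact Submodule.mem_sup_right ⟨b 3, rfl⟩
  have hUV : LinearMap.range (wedgeMap (b 0)) ⊔ LinearMap.range (wedgeMap (b 1)) = K :=
    le_antisymm (sup_le hUK hVK) hKUV
  have hrange : LinearMap.range (β Q) =
      LinearMap.range (wedgeMap (b 0)) ⊔ LinearMap.range (wedgeMap (b 1)) := by
    apply le_antisymm
    · rw [LinearMap.range_eq_map, ← span_tmul_eq_top ℂ S R, Submodule.map_span,
        Submodule.span_le]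
      rintro x ⟨y, ⟨s', r', rfl⟩, rfl⟩
      rw [hQ]
      exact Submodule.add_mem _
        (Submodule.mem_sup_left (Submodule.smul_mem _ _ ⟨s', rfl⟩))
        (Submodule.mem_sup_right (Submodule.smul_mem _ _ ⟨s', rfl⟩))
    · apply sup_le
      · rintro x ⟨u, rfl⟩
        exact ⟨u ⊗ₜ[ℂ] c₁, by rw [hQ, hc₁₁, hc₁₂, one_smul, zero_smul, add_zero]; rfl⟩
      · rintro x ⟨u, rfl⟩
        exact ⟨u ⊗ₜ[ℂ] c₂, by rw [hQ, hc₂₂, hc₂₁, zero_smul, one_smul, zero_add]; rfl⟩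
  have hdim5 : Module.finrank ℂ ↥K = 5 := by
    rw [hK, finrank_span_eq_card hv, Fintype.card_fin]
  refine ⟨hrange, ?_, ?_⟩
  · rw [hrange, hUV]; exact hdim5
  · have hrn := LinearMap.finrank_range_add_finrank_ker (β Q)
    rw [hrange, hUV, hdim5] at hrn
    have h16 : Module.finrank ℂ (S ⊗[ℂ] R) = 16 := by
      rw [Module.finrank_tensorProduct, hS, hR]
    rw [h16] at hrn
    omega
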